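/- Let M > 0 and Q ∈ ℝ with Q² ≤ M², and set S = 2M² − Q² + 2M²√(1 − Q²/M²). Then S > 0 and M = ½√S + Q²/(2√S). -/
import Mathlib


/-- Reissner–Nordström near-horizon relation: if `M > 0`, `Q² ≤ M²`, and
`S = 2M² − Q² + 2M²√(1 − Q²/M²)`, then `S > 0` and
`M = ½√S + Q²/(2√S)`. -/
theorem reissner_nordstrom_relation (M Q : ℝ) (hM : 0 < M) (hQ : Q ^ 2 ≤ M ^ 2)
    (S : ℝ) (hS : S = 2 * M ^ 2 - Q ^ 2 + 2 * M ^ 2 * Real.sqrt (1 - Q ^ 2 / M ^ 2)) :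
    0 < S ∧ M = Real.sqrt S / 2 + Q ^ 2 / (2 * Real.sqrt S) := by
  set t := Real.sqrt (M ^ 2 - Q ^ 2) with ht
  have htnn : 0 ≤ t := Real.sqrt_nonneg _
  have ht2 : t ^ 2 = M ^ 2 - Q ^ 2 := Real.sq_sqrt (by linarith)
  have hMne : (M : ℝ) ≠ 0 := ne_of_gt hM
  have hsq : Real.sqrt (1 - Q ^ 2 / M ^ 2) = t / M := by
    have h1 : 1 - Q ^ 2 / M ^ 2 = (M ^ 2 - Q ^ 2) / M ^ 2 := by field_simp
    rw [h1, Real.sqrt_div (by linarith : (0:ℝ) ≤ M ^ 2 - Q ^ 2), Real.sqrt_sq hM.le]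
  have hSeq : S = (M + t) ^ 2 := by
    rw [hS, hsq]; field_simp; nlinarith [ht2]
  have hMt : 0 < M + t := by linarith
  have hrS : Real.sqrt S = M + t := by
    rw [hSeq, Real.sqrt_sq hMt.le]
  constructor
  · rw [hSeq]; positivity
  · rw [hrS]
    field_simp
    nlinarith [ht2]
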